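/- Let p be a prime and n, n' positive integers with n' not dividing n necessarily. If L(X) = X^{p^{n'}} - λ(X) ∈ F_{p^n}[X] splits completely over F_{p^n} and ℓ := log_p(deg λ) > 0, then ⌊n/n'⌋·ℓ + (n mod n') ≥ n'. -/
import Mathlib


theorem stmt_0 (p n n' ℓ : ℕ) [Fact p.Prime] (hn : 0 < n) (hn' : 0 < n') (hℓ : 0 < ℓ)
    (lam : Polynomial (GaloisField p n)) (hdeg : lam.natDegree = p ^ ℓ)
    (L : Polynomial (GaloisField p n))
    (hL : L = Polynomial.X ^ (p ^ n') - lam)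
    (hroots : {x : GaloisField p n | Polynomial.eval x L = 0}.ncard = p ^ n') :
    (n / n') * ℓ + (n % n') ≥ n' := by
  classical
  have hp : p.Prime := Fact.out
  haveI : Fintype (GaloisField p n) := Fintype.ofFinite _
  have hp1 : 1 < p := hp.one_lt
  set S : Set (GaloisField p n) := {x : GaloisField p n | Polynomial.eval x L = 0} with hSdef
  have hSfin : S.Finite := Set.toFinite S
  have hcard : Fintype.card (GaloisField p n) = p ^ n := by
    rw [← Nat.card_eq_fintype_card]; exact GaloisField.card p n hn.ne'
  -- n' ≤ n
  have hn'n : n' ≤ n := by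
    have h1 : S.ncard ≤ Fintype.card (GaloisField p n) := by
      calc S.ncard ≤ (Set.univ : Set (GaloisField p n)).ncard :=
            Set.ncard_le_ncard (Set.subset_univ S) Set.finite_univ
        _ = Fintype.card (GaloisField p n) := by rw [Set.ncard_univ, Nat.card_eq_fintype_card]
    rw [hroots, hcard] at h1
    exact (Nat.pow_le_pow_iff_right hp1).mp h1
  have hroot : ∀ a ∈ S, a ^ p ^ n' = lam.eval a := by
    intro a ha
    have h : Polynomial.eval a L = 0 := ha
    rw [hL] at h
    simp only [Polynomial.eval_sub, Polynomial.eval_pow, Polynomial.eval_X] at h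
    linear_combination h
  -- construct iterates
  have key : ∀ k : ℕ, ∃ μ : Polynomial (GaloisField p n), μ.natDegree = p ^ (k * ℓ) ∧
      ∀ a ∈ S, μ.eval a = a ^ p ^ (k * n') := by
    intro k
    induction k with
    | zero => exact ⟨Polynomial.X, by simp, by simp⟩
    | succ k ih =>
      obtain ⟨μ, hμd, hμe⟩ := ih
      refine ⟨(lam.map (iterateFrobenius (GaloisField p n) p (k * n'))).comp μ, ?_, ?_⟩
      · rw [Polynomial.natDegree_comp, Polynomial.natDegree_map_eq_of_injective
          (iterateFrobenius (GaloisField p n) p (k * n')).injective, hdeg, hμd, ← pow_add]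
        ring_nf
      · intro a ha
        have h1 : μ.eval a = iterateFrobenius (GaloisField p n) p (k * n') a := by
          rw [hμe a ha, iterateFrobenius_def]
        rw [Polynomial.eval_comp, h1, Polynomial.eval_map,
          Polynomial.eval₂_at_apply, iterateFrobenius_def, ← hroot a ha,
          ← pow_mul, ← pow_add]
        ring_nf
  obtain ⟨μ, hμd, hμe⟩ := key (n / n')
  have hq : 1 ≤ n / n' := (Nat.one_le_div_iff hn').mpr hn'n
  set q := n / n' with hqdef
  set r := n % n' with hrdef
  set G : Polynomial (GaloisField p n) := μ ^ p ^ r - Polynomial.X with hGdef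
  have hDpos : 1 ≤ q * ℓ + r := le_add_right (le_trans hℓ (Nat.le_mul_of_pos_left ℓ hq))
  have hD1 : 1 < p ^ (q * ℓ + r) := by
    calc 1 < p := hp1
      _ = p ^ 1 := (pow_one p).symm
      _ ≤ p ^ (q * ℓ + r) := Nat.pow_le_pow_right hp.pos hDpos
  have hdegpow : (μ ^ p ^ r).natDegree = p ^ (q * ℓ + r) := by
    rw [Polynomial.natDegree_pow, hμd, ← pow_add]
    ring_nf
  have hGdeg : G.natDegree = p ^ (q * ℓ + r) := by
    rw [hGdef, Polynomial.natDegree_sub_eq_left_of_natDegree_lt, hdegpow]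
    rw [hdegpow, Polynomial.natDegree_X]
    exact hD1
  have hGne : G ≠ 0 := by
    intro h
    rw [h, Polynomial.natDegree_zero] at hGdeg
    omega
  have hGroot : ∀ a ∈ S, G.eval a = 0 := by
    intro a ha
    have h1 : (a ^ p ^ (q * n')) ^ p ^ r = a := by
      rw [← pow_mul, ← pow_add]
      have : q * n' + r = n := by
        rw [hqdef, hrdef, Nat.mul_comm]
        exact Nat.div_add_mod n n'
      rw [this, ← hcard]
      exact FiniteField.pow_card a
    rw [hGdef]
    simp only [Polynomial.eval_sub, Polynomial.eval_pow, Polynomial.eval_X]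
    rw [hμe a ha, h1, sub_self]
  -- count roots
  have hsub : hSfin.toFinset ⊆ G.roots.toFinset := by
    intro a ha
    rw [Set.Finite.mem_toFinset] at ha
    rw [Multiset.mem_toFinset, Polynomial.mem_roots hGne]
    exact hGroot a ha
  have hcount : p ^ n' ≤ p ^ (q * ℓ + r) := by
    calc p ^ n' = hSfin.toFinset.card := by
          rw [← Set.ncard_eq_toFinset_card S hSfin, hroots]
      _ ≤ G.roots.toFinset.card := Finset.card_le_card hsub
      _ ≤ Multiset.card G.roots := Multiset.toFinset_card_le _
      _ ≤ G.natDegree := G.card_roots'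
      _ = p ^ (q * ℓ + r) := hGdeg
  exact (Nat.pow_le_pow_iff_right hp1).mp hcount
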